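/- Let d ≥ 2 be an integer and let m* : ℝ^{d−1} × [0,∞) → ℂ satisfy condition (M*) with constants (c̄, δ). Then there exist δ̃ > 0 and C > 0, depending only on c̄, δ and d, such that the function (ξ, x_d) ↦ e^{δ̃ |ξ| x_d} m*(ξ, x_d) satisfies condition (M*) with constants (C, δ̃). -/

import Mathlib

open MeasureTheory Real

/-- Principal complex square root `√z = z^(1/2)` (principal branch of `cpow`). -/
noncomputable def csqrt (z : ℂ) : ℂ := z ^ (1/2 : ℂ)

/-- The sector `Σ_ε = {λ ∈ ℂ : λ ≠ 0, |Arg λ| < π − ε}`. -/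
def SigmaSector (ε : ℝ) : Set ℂ := {l : ℂ | l ≠ 0 ∧ |l.arg| < Real.pi - ε}

/-- Mikhlin condition (M) with constant `cbar`, with `K = ⌊(d+1)/2⌋`. -/
def CondM (d : ℕ) (m : EuclideanSpace ℝ (Fin (d-1)) → ℂ) (cbar : ℝ) : Prop :=
  ContDiffOn ℝ ((d+1)/2 : ℕ) m {ξ : EuclideanSpace ℝ (Fin (d-1)) | ξ ≠ 0} ∧
  ∀ k : ℕ, k ≤ (d+1)/2 → ∀ ξ : EuclideanSpace ℝ (Fin (d-1)), ξ ≠ 0 →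
    ‖ξ‖ ^ k * ‖iteratedFDerivWithin ℝ k m
        {ξ : EuclideanSpace ℝ (Fin (d-1)) | ξ ≠ 0} ξ‖ ≤ cbar

/-- Parameterized Mikhlin condition (M*) with constants `(cbar, δ)`, `K = ⌊(d+1)/2⌋`. -/
def CondMStar (d : ℕ) (m : EuclideanSpace ℝ (Fin (d-1)) → ℝ → ℂ) (cbar δ : ℝ) : Prop :=
  (∀ y : ℝ, 0 ≤ y →
    ContDiffOn ℝ ((d+1)/2 : ℕ) (fun ξ => m ξ y)
      {ξ : EuclideanSpace ℝ (Fin (d-1)) | ξ ≠ 0}) ∧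
  ∀ k : ℕ, k ≤ (d+1)/2 →
    ∀ ξ : EuclideanSpace ℝ (Fin (d-1)), ξ ≠ 0 → ∀ y : ℝ, 0 ≤ y →
      ‖ξ‖ ^ k * ‖iteratedFDerivWithin ℝ k (fun ξ => m ξ y)
          {ξ : EuclideanSpace ℝ (Fin (d-1)) | ξ ≠ 0} ξ‖ ≤
        cbar * Real.exp (-δ * ‖ξ‖ * y) / (1 + y)

/-- The fundamental multiplier `m₀(s, y)`. -/
noncomputable def m0 (l : ℂ) (α : ℝ) (s y : ℝ) : ℂ :=
  ((csqrt (l + (s:ℂ)^2) + s) / ((α:ℂ) + l + csqrt (l + (s:ℂ)^2) + s)) *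
    ((Complex.exp (-(y:ℂ) * csqrt (l + (s:ℂ)^2)) - Complex.exp (-(y:ℂ) * s)) / l)

/-- `E(s, y) = e^{-ys} - e^{-y√(λ+s²)}`. -/
noncomputable def Efun (l : ℂ) (s y : ℝ) : ℂ :=
  Complex.exp (-(y:ℂ) * s) - Complex.exp (-(y:ℂ) * csqrt (l + (s:ℂ)^2))

section Aux
open Set Finset
variable {E : Type*} [NormedAddCommGroup E] [InnerProductSpace ℝ E] [FiniteDimensional ℝ E]


lemma aux_norm_contDiffOn (n : ℕ) :
    ContDiffOn ℝ n (fun x : E => ‖x‖) {x : E | x ≠ 0} := fun x hx =>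
  ((contDiffAt_id.norm ℝ hx).of_le le_rfl).contDiffWithinAt

lemma aux_norm_deriv_bound (K : ℕ) :
    ∃ M : ℝ, 1 ≤ M ∧ ∀ i : ℕ, 1 ≤ i → i ≤ K → ∀ ξ : E, ξ ≠ 0 →
      ‖iteratedFDerivWithin ℝ i (fun x : E => ‖x‖) {x : E | x ≠ 0} ξ‖ ≤ M / ‖ξ‖ ^ (i - 1) := by
  set s : Set E := {x : E | x ≠ 0} with hs_def
  have hso : IsOpen s := isOpen_ne
  have hsu : UniqueDiffOn ℝ s := hso.uniqueDiffOn
  have hN : ContDiffOn ℝ (K : ℕ) (fun x : E => ‖x‖) s := aux_norm_contDiffOn K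
  have hsph : Metric.sphere (0 : E) 1 ⊆ s := by
    intro u hu
    simp only [Metric.mem_sphere, dist_zero_right] at hu
    simp only [hs_def, mem_setOf_eq]
    intro h; rw [h] at hu; simp at hu
  have hbd : ∀ i : ℕ, i ≤ K → ∃ C : ℝ, ∀ u ∈ Metric.sphere (0 : E) 1,
      ‖iteratedFDerivWithin ℝ i (fun x : E => ‖x‖) s u‖ ≤ C := by
    intro i hi
    have hcont : ContinuousOn (iteratedFDerivWithin ℝ i (fun x : E => ‖x‖) s) s :=
      hN.continuousOn_iteratedFDerivWithin (by exact_mod_cast hi) hsu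
    exact (isCompact_sphere 0 1).exists_bound_of_continuousOn (hcont.mono hsph)
  choose! c hc using hbd
  refine ⟨1 + ∑ i ∈ range (K + 1), |c i|, ?_, ?_⟩
  · have : (0:ℝ) ≤ ∑ i ∈ range (K + 1), |c i| := Finset.sum_nonneg fun _ _ => abs_nonneg _
    linarith
  intro i hi1 hiK ξ hξ
  set M : ℝ := 1 + ∑ j ∈ range (K + 1), |c j| with hM_def
  have hciM : c i ≤ M := by
    have h1 : |c i| ≤ ∑ j ∈ range (K + 1), |c j| :=
      Finset.single_le_sum (f := fun j => |c j|) (fun j _ => abs_nonneg _)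
        (Finset.mem_range.2 (Nat.lt_succ_of_le hiK))
    calc c i ≤ |c i| := le_abs_self _
      _ ≤ M := by rw [hM_def]; linarith
  have hr : (0:ℝ) < ‖ξ‖ := norm_pos_iff.2 hξ
  set r : ℝ := ‖ξ‖ with hr_def
  -- scaling map
  set g : E →L[ℝ] E := r⁻¹ • ContinuousLinearMap.id ℝ E with hg_def
  have hgx : ∀ x : E, g x = r⁻¹ • x := fun x => rfl
  have hpre : ⇑g ⁻¹' s = s := by
    ext x
    simp [Set.mem_preimage, hs_def, hgx x, smul_eq_zero, inv_eq_zero, hr.ne']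
  have hu1 : ‖g ξ‖ = 1 := by
    rw [hgx, norm_smul, norm_inv, norm_norm, ← hr_def, inv_mul_cancel₀ hr.ne']
  have hgs : g ξ ∈ s := hsph (by simpa using hu1)
  have key := g.iteratedFDerivWithin_comp_right hN hsu (by rw [hpre]; exact hsu) hgs
    (by exact_mod_cast hiK : (i : WithTop ℕ∞) ≤ (K : WithTop ℕ∞))
  rw [hpre] at key
  have hcomp : ((fun x : E => ‖x‖) ∘ g) = r⁻¹ • (fun x : E => ‖x‖) := by
    funext x
    simp only [Function.comp_apply, hgx, Pi.smul_apply, norm_smul, norm_inv, norm_norm,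
      smul_eq_mul, Real.norm_eq_abs, abs_of_pos hr]
  rw [hcomp, iteratedFDerivWithin_const_smul_apply ((hN.of_le (by exact_mod_cast hiK)).contDiffWithinAt hξ) hsu hξ]
    at key
  have hnorm : r⁻¹ * ‖iteratedFDerivWithin ℝ i (fun x : E => ‖x‖) s ξ‖
      ≤ c i * (r⁻¹) ^ i := by
    have h1 : ‖r⁻¹ • iteratedFDerivWithin ℝ i (fun x : E => ‖x‖) s ξ‖
        = r⁻¹ * ‖iteratedFDerivWithin ℝ i (fun x : E => ‖x‖) s ξ‖ := by
      rw [norm_smul r⁻¹ (iteratedFDerivWithin ℝ i (fun x : E => ‖x‖) s ξ), norm_inv,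
        Real.norm_eq_abs, abs_of_pos hr]
    rw [← h1, key]
    calc ‖(iteratedFDerivWithin ℝ i (fun x : E => ‖x‖) s (g ξ)).compContinuousLinearMap
          fun _ => g‖
        ≤ ‖iteratedFDerivWithin ℝ i (fun x : E => ‖x‖) s (g ξ)‖ * ∏ _j : Fin i, ‖g‖ :=
          ContinuousMultilinearMap.norm_compContinuousLinearMap_le _ _
      _ ≤ c i * (r⁻¹) ^ i := by
          have hcg : ‖iteratedFDerivWithin ℝ i (fun x : E => ‖x‖) s (g ξ)‖ ≤ c i :=
            hc i hiK (g ξ) (by simpa using hu1)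
          have hgn : ‖g‖ ≤ r⁻¹ := by
            refine ContinuousLinearMap.opNorm_le_bound _ (by positivity) fun x => ?_
            rw [hgx x, norm_smul, norm_inv, Real.norm_eq_abs, abs_of_pos hr]
          have hprod : (∏ _j : Fin i, ‖g‖) ≤ (r⁻¹)^i := by
            rw [Finset.prod_const, Finset.card_univ, Fintype.card_fin]
            exact pow_le_pow_left₀ (norm_nonneg _) hgn i
          have h0 : (0:ℝ) ≤ ‖iteratedFDerivWithin ℝ i (fun x : E => ‖x‖) s (g ξ)‖ :=
            norm_nonneg _
          exact mul_le_mul hcg hprod (Finset.prod_nonneg fun _ _ => norm_nonneg _)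
            (le_trans h0 hcg)
  -- convert to the final bound
  have hMc : c i * (r⁻¹)^i ≤ M * (r⁻¹)^i := by
    gcongr
  have h2 : ‖iteratedFDerivWithin ℝ i (fun x : E => ‖x‖) s ξ‖ ≤ r * (M * (r⁻¹)^i) := by
    have := le_trans hnorm hMc
    calc ‖iteratedFDerivWithin ℝ i (fun x : E => ‖x‖) s ξ‖
        = r * (r⁻¹ * ‖iteratedFDerivWithin ℝ i (fun x : E => ‖x‖) s ξ‖) := by
          field_simp
      _ ≤ r * (M * (r⁻¹)^i) := by gcongr
  calc ‖iteratedFDerivWithin ℝ i (fun x : E => ‖x‖) s ξ‖ ≤ r * (M * (r⁻¹)^i) := h2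
    _ = M / r ^ (i-1) := by
        rw [inv_pow]
        rw [show i = (i-1)+1 by omega]
        rw [pow_succ]
        field_simp
        ring_nf
        rw [Nat.add_sub_cancel_left]


lemma aux_weight_bound (K : ℕ) (M : ℝ) (hM : 1 ≤ M)
    (hMb : ∀ i : ℕ, 1 ≤ i → i ≤ K → ∀ ξ : E, ξ ≠ 0 →
      ‖iteratedFDerivWithin ℝ i (fun x : E => ‖x‖) {x : E | x ≠ 0} ξ‖ ≤ M / ‖ξ‖ ^ (i - 1))
    (c : ℝ) (hc : 0 ≤ c) (k : ℕ) (hk : k ≤ K) (ξ : E) (hξ : ξ ≠ 0) :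
    ‖iteratedFDerivWithin ℝ k (fun x : E => Real.exp (c * ‖x‖)) {x : E | x ≠ 0} ξ‖ ≤
      k.factorial * Real.exp (c * ‖ξ‖) * (M * (c + ‖ξ‖⁻¹)) ^ k := by
  set s : Set E := {x : E | x ≠ 0} with hs_def
  have hso : IsOpen s := isOpen_ne
  have hsu : UniqueDiffOn ℝ s := hso.uniqueDiffOn
  have hr : (0:ℝ) < ‖ξ‖ := norm_pos_iff.2 hξ
  have hNsm : ContDiffOn ℝ (K:ℕ) (fun x : E => ‖x‖) s := fun x hx =>
    ((contDiffAt_id.norm ℝ hx).of_le le_rfl).contDiffWithinAt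
  have hf : ContDiffOn ℝ (K:ℕ) (fun x : E => c * ‖x‖) s := by
    simpa [smul_eq_mul] using hNsm.const_smul c
  have hcomp : (fun x : E => Real.exp (c * ‖x‖)) = Real.exp ∘ (fun x : E => c * ‖x‖) := rfl
  rw [hcomp]
  refine norm_iteratedFDerivWithin_comp_le (t := univ) (N := (K : WithTop ℕ∞))
    Real.contDiff_exp.contDiffOn hf (by exact_mod_cast hk) uniqueDiffOn_univ hsu
    (mapsTo_univ _ _) hξ ?_ ?_
  · -- derivatives of exp bounded by exp (c‖ξ‖)
    intro i _
    rw [iteratedFDerivWithin_univ, norm_iteratedFDeriv_eq_norm_iteratedDeriv,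
      iteratedDeriv_eq_iterate, Real.iter_deriv_exp]
    simp [Real.norm_eq_abs, abs_of_pos (Real.exp_pos _)]
  · -- derivatives of c*‖·‖ bounded by (M(c+‖ξ‖⁻¹))^i
    intro i hi1 _
    have heq : (fun x : E => c * ‖x‖) = c • (fun x : E => ‖x‖) := by
      funext x; simp [smul_eq_mul]
    have hNi : ContDiffOn ℝ (i:ℕ) (fun x : E => ‖x‖) s :=
      hNsm.of_le (by exact_mod_cast le_trans ‹i ≤ k› hk)
    rw [heq, iteratedFDerivWithin_const_smul_apply (hNi.contDiffWithinAt hξ) hsu hξ,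
      norm_smul c (iteratedFDerivWithin ℝ i (fun x : E => ‖x‖) s ξ), Real.norm_eq_abs,
      abs_of_nonneg hc]
    have h1 : ‖iteratedFDerivWithin ℝ i (fun x : E => ‖x‖) s ξ‖ ≤ M / ‖ξ‖ ^ (i-1) :=
      hMb i hi1 (le_trans ‹i ≤ k› hk) ξ hξ
    have h2 : c * ‖iteratedFDerivWithin ℝ i (fun x : E => ‖x‖) s ξ‖ ≤ c * (M / ‖ξ‖^(i-1)) := by
      gcongr
    refine h2.trans ?_
    have e1 : c * (‖ξ‖⁻¹)^(i-1) ≤ (c + ‖ξ‖⁻¹)^i := by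
      have : (c + ‖ξ‖⁻¹)^i = (c + ‖ξ‖⁻¹) * (c + ‖ξ‖⁻¹)^(i-1) := by
        rw [← pow_succ']
        congr 1
        omega
      rw [this]
      have hb : (0:ℝ) ≤ ‖ξ‖⁻¹ := by positivity
      exact mul_le_mul (le_add_of_nonneg_right hb)
        (pow_le_pow_left₀ hb (le_add_of_nonneg_left hc) _) (pow_nonneg hb _) (by positivity)
    have e2 : M ≤ M^i := le_self_pow₀ hM (by omega)
    calc c * (M / ‖ξ‖^(i-1)) = M * (c * (‖ξ‖⁻¹)^(i-1)) := by
          rw [inv_pow]; field_simp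
      _ ≤ M^i * (c + ‖ξ‖⁻¹)^i :=
          mul_le_mul e2 e1 (by positivity) (by positivity)
      _ = (M * (c + ‖ξ‖⁻¹))^i := (mul_pow _ _ _).symm

end Aux

/-- `e^{δ̃|ξ|x_d} m*(ξ, x_d)` satisfies (M*) for small enough `δ̃`. -/
theorem stmt_1 (d : ℕ) (hd : 2 ≤ d) (cbar δ : ℝ) (hcbar : 0 < cbar) (hδ : 0 < δ) :
    ∃ δ' C : ℝ, 0 < δ' ∧ 0 < C ∧
      ∀ m : EuclideanSpace ℝ (Fin (d-1)) → ℝ → ℂ,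
        CondMStar d m cbar δ →
        CondMStar d (fun ξ y => (Real.exp (δ' * ‖ξ‖ * y) : ℂ) * m ξ y) C δ' := by
  classical
  set K : ℕ := (d+1)/2 with hK_def
  obtain ⟨M, hM1, hMb⟩ := aux_norm_deriv_bound (E := EuclideanSpace ℝ (Fin (d-1))) K
  have hM0 : (0:ℝ) < M := lt_of_lt_of_le one_pos hM1
  refine ⟨δ / (2*((K:ℝ)+1)), cbar * (((K:ℝ)+1) * 2^K * (K.factorial:ℝ) * M^K),
    by positivity, by positivity, ?_⟩
  set δ' : ℝ := δ / (2*((K:ℝ)+1)) with hδ'_def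
  have hδ'pos : 0 < δ' := by positivity
  have hδ'half : ((K:ℝ)+1) * δ' = δ / 2 := by
    rw [hδ'_def]; field_simp
  have hδ'le : δ' ≤ δ / 2 := by
    rw [hδ'_def]
    apply div_le_div_of_nonneg_left hδ.le two_pos
    have : (0:ℝ) ≤ (K:ℝ) := Nat.cast_nonneg _
    linarith
  intro m hm
  set s : Set (EuclideanSpace ℝ (Fin (d-1))) := {ξ : EuclideanSpace ℝ (Fin (d-1)) | ξ ≠ 0}
    with hs_def
  have hso : IsOpen s := isOpen_ne
  have hsu : UniqueDiffOn ℝ s := hso.uniqueDiffOn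
  have hNsm : ContDiffOn ℝ (K:ℕ) (fun x : EuclideanSpace ℝ (Fin (d-1)) => ‖x‖) s := fun x hx =>
    ((contDiffAt_id.norm ℝ hx).of_le le_rfl).contDiffWithinAt
  -- the weight as a real function
  have hw : ∀ y : ℝ, ContDiffOn ℝ (K:ℕ)
      (fun ξ : EuclideanSpace ℝ (Fin (d-1)) => Real.exp ((δ'*y) * ‖ξ‖)) s := fun y =>
    Real.contDiff_exp.comp_contDiffOn (by simpa [smul_eq_mul] using hNsm.const_smul (δ'*y))
  have hfeq : ∀ y : ℝ, (fun ξ : EuclideanSpace ℝ (Fin (d-1)) =>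
      ((Real.exp (δ' * ‖ξ‖ * y) : ℝ) : ℂ)) =
      ⇑Complex.ofRealLI ∘ (fun ξ : EuclideanSpace ℝ (Fin (d-1)) => Real.exp ((δ'*y) * ‖ξ‖)) := by
    intro y; funext ξ
    show ((Real.exp (δ' * ‖ξ‖ * y) : ℝ) : ℂ) = ((Real.exp ((δ'*y) * ‖ξ‖) : ℝ) : ℂ)
    rw [show δ' * ‖ξ‖ * y = (δ'*y) * ‖ξ‖ from by ring]
  have hf1 : ∀ y : ℝ, ContDiffOn ℝ (K:ℕ)
      (fun ξ : EuclideanSpace ℝ (Fin (d-1)) => ((Real.exp (δ' * ‖ξ‖ * y) : ℝ) : ℂ)) s := by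
    intro y
    rw [hfeq y]
    exact Complex.ofRealCLM.contDiff.comp_contDiffOn (hw y)
  constructor
  · intro y hy
    exact (hf1 y).mul (hm.1 y hy)
  · intro k hk ξ hξ y hy
    have hkK : k ≤ K := hk
    have hr : (0:ℝ) < ‖ξ‖ := norm_pos_iff.2 hξ
    set r : ℝ := ‖ξ‖ with hr_def
    set c : ℝ := δ' * y with hc_def
    have hc0 : 0 ≤ c := mul_nonneg hδ'pos.le hy
    have hmul := norm_iteratedFDerivWithin_mul_le (𝕜 := ℝ) (A := ℂ)
      (hf1 y) (hm.1 y hy) hsu hξ (n := k) (by exact_mod_cast hkK)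
    have hwb : ∀ i : ℕ, i ≤ k →
        ‖iteratedFDerivWithin ℝ i (fun ξ : EuclideanSpace ℝ (Fin (d-1)) =>
          ((Real.exp (δ' * ‖ξ‖ * y) : ℝ) : ℂ)) s ξ‖ ≤
          i.factorial * Real.exp (c * r) * (M * (c + r⁻¹))^i := by
      intro i hik
      rw [hfeq y, Complex.ofRealLI.norm_iteratedFDerivWithin_comp_left ((hw y).contDiffWithinAt hξ) hsu hξ
        (by exact_mod_cast le_trans hik hkK)]
      exact aux_weight_bound K M hM1 hMb c hc0 i (le_trans hik hkK) ξ hξ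
    set B : ℝ := 2^K * (K.factorial:ℝ) * M^K * (cbar * Real.exp (-δ' * r * y) / (1+y))
      with hB_def
    have hB0 : 0 ≤ B := by positivity
    have hterm : ∀ i ∈ Finset.range (k+1),
        (k.choose i : ℝ) *
          (r^i * ‖iteratedFDerivWithin ℝ i (fun ξ : EuclideanSpace ℝ (Fin (d-1)) =>
            ((Real.exp (δ' * ‖ξ‖ * y) : ℝ) : ℂ)) s ξ‖) *
          (r^(k-i) * ‖iteratedFDerivWithin ℝ (k-i) (fun ξ => m ξ y) s ξ‖) ≤ B := by
      intro i hi
      have hik : i ≤ k := Nat.lt_succ_iff.mp (Finset.mem_range.mp hi)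
      have hchoose : (k.choose i : ℝ) ≤ 2^K := by
        have h1 : k.choose i ≤ 2^k := by
          rw [← Nat.sum_range_choose k]
          exact Finset.single_le_sum (f := fun j => k.choose j) (fun _ _ => Nat.zero_le _) hi
        calc (k.choose i : ℝ) ≤ ((2^k : ℕ) : ℝ) := by exact_mod_cast h1
          _ ≤ 2^K := by exact_mod_cast Nat.pow_le_pow_right (by norm_num) hkK
      have hbase1 : (1:ℝ) ≤ M * (c*r+1) := by nlinarith [mul_nonneg hc0 hr.le]
      have ha : r^i * ‖iteratedFDerivWithin ℝ i (fun ξ : EuclideanSpace ℝ (Fin (d-1)) =>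
          ((Real.exp (δ' * ‖ξ‖ * y) : ℝ) : ℂ)) s ξ‖ ≤
          (K.factorial:ℝ) * M^K * Real.exp (((K:ℝ)+1)*(c*r)) := by
        calc r^i * ‖iteratedFDerivWithin ℝ i (fun ξ : EuclideanSpace ℝ (Fin (d-1)) =>
              ((Real.exp (δ' * ‖ξ‖ * y) : ℝ) : ℂ)) s ξ‖
            ≤ r^i * ((i.factorial:ℝ) * Real.exp (c * r) * (M * (c + r⁻¹))^i) :=
              mul_le_mul_of_nonneg_left (hwb i hik) (by positivity)
          _ = (i.factorial:ℝ) * Real.exp (c*r) * (M*(c*r+1))^i := by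
              rw [show (M*(c*r+1))^i = (r*(M*(c+r⁻¹)))^i from by
                rw [show r*(M*(c+r⁻¹)) = M*(c*r+1) from by field_simp]]
              rw [mul_pow r]
              ring
          _ ≤ (K.factorial:ℝ) * Real.exp (c*r) * (M*(c*r+1))^K := by
              have hik' : i ≤ K := le_trans hik hkK
              refine mul_le_mul (mul_le_mul_of_nonneg_right
                (by exact_mod_cast Nat.factorial_le hik') (Real.exp_pos _).le)
                (pow_le_pow_right₀ hbase1 hik') (by positivity) (by positivity)
          _ ≤ (K.factorial:ℝ) * Real.exp (c*r) * (M^K * (Real.exp (c*r))^K) := by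
              rw [mul_pow]
              have h5 : (c*r+1)^K ≤ (Real.exp (c*r))^K :=
                pow_le_pow_left₀ (by positivity) (by linarith [Real.add_one_le_exp (c*r)]) K
              have h6 : M^K*(c*r+1)^K ≤ M^K*(Real.exp (c*r))^K :=
                mul_le_mul_of_nonneg_left h5 (by positivity)
              exact mul_le_mul_of_nonneg_left h6 (by positivity)
          _ = (K.factorial:ℝ) * M^K * (Real.exp (c*r) * Real.exp ((K:ℝ)*(c*r))) := by
              rw [← Real.exp_nat_mul]
              ring
          _ = (K.factorial:ℝ) * M^K * Real.exp (((K:ℝ)+1)*(c*r)) := by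
              rw [← Real.exp_add]
              congr 1
              ring
      have hb : r^(k-i) * ‖iteratedFDerivWithin ℝ (k-i) (fun ξ => m ξ y) s ξ‖ ≤
          cbar * Real.exp (-δ * r * y) / (1+y) :=
        hm.2 (k-i) (le_trans (Nat.sub_le k i) hkK) ξ hξ y hy
      have key2 : ((K:ℝ)+1)*(c*r) + (-δ*r*y) ≤ -δ'*r*y := by
        have h4 : ((K:ℝ)+1)*(c*r) = (δ/2)*(y*r) := by
          rw [hc_def, show ((K:ℝ)+1)*((δ'*y)*r) = (((K:ℝ)+1)*δ')*(y*r) from by ring, hδ'half]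
        rw [h4]
        nlinarith [mul_nonneg (sub_nonneg.2 hδ'le) (mul_nonneg hy hr.le)]
      calc (k.choose i : ℝ) *
            (r^i * ‖iteratedFDerivWithin ℝ i (fun ξ : EuclideanSpace ℝ (Fin (d-1)) =>
              ((Real.exp (δ' * ‖ξ‖ * y) : ℝ) : ℂ)) s ξ‖) *
            (r^(k-i) * ‖iteratedFDerivWithin ℝ (k-i) (fun ξ => m ξ y) s ξ‖)
          ≤ (2^K : ℝ) * ((K.factorial:ℝ) * M^K * Real.exp (((K:ℝ)+1)*(c*r))) *
            (cbar * Real.exp (-δ * r * y) / (1+y)) := by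
            refine mul_le_mul (mul_le_mul hchoose ha (by positivity) (by positivity)) hb
              (by positivity) (by positivity)
        _ = 2^K * (K.factorial:ℝ) * M^K *
            (cbar * (Real.exp (((K:ℝ)+1)*(c*r)) * Real.exp (-δ*r*y)) / (1+y)) := by ring
        _ ≤ B := by
            rw [hB_def]
            gcongr
            rw [← Real.exp_add]
            exact Real.exp_le_exp.2 key2
    calc r ^ k * ‖iteratedFDerivWithin ℝ k (fun ξ : EuclideanSpace ℝ (Fin (d-1)) =>
          ((Real.exp (δ' * ‖ξ‖ * y) : ℝ) : ℂ) * m ξ y) s ξ‖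
        ≤ r ^ k * ∑ i ∈ Finset.range (k+1), (k.choose i : ℝ) *
            ‖iteratedFDerivWithin ℝ i (fun ξ : EuclideanSpace ℝ (Fin (d-1)) =>
              ((Real.exp (δ' * ‖ξ‖ * y) : ℝ) : ℂ)) s ξ‖ *
            ‖iteratedFDerivWithin ℝ (k-i) (fun ξ => m ξ y) s ξ‖ :=
          mul_le_mul_of_nonneg_left hmul (by positivity)
      _ = ∑ i ∈ Finset.range (k+1), (k.choose i : ℝ) *
            (r^i * ‖iteratedFDerivWithin ℝ i (fun ξ : EuclideanSpace ℝ (Fin (d-1)) =>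
              ((Real.exp (δ' * ‖ξ‖ * y) : ℝ) : ℂ)) s ξ‖) *
            (r^(k-i) * ‖iteratedFDerivWithin ℝ (k-i) (fun ξ => m ξ y) s ξ‖) := by
          rw [Finset.mul_sum]
          refine Finset.sum_congr rfl fun i hi => ?_
          have hik : i ≤ k := Nat.lt_succ_iff.mp (Finset.mem_range.mp hi)
          have hpow : r^i * r^(k-i) = r^k := by
            rw [← pow_add]; congr 1; omega
          rw [← hpow]; ring
      _ ≤ (Finset.range (k+1)).card • B := Finset.sum_le_card_nsmul _ _ _ hterm
      _ = ((k+1:ℕ):ℝ) * B := by rw [Finset.card_range, nsmul_eq_mul]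
      _ ≤ ((K:ℝ)+1) * B := by
          have : ((k+1:ℕ):ℝ) ≤ (K:ℝ)+1 := by exact_mod_cast Nat.succ_le_succ hkK
          exact mul_le_mul_of_nonneg_right this hB0
      _ = cbar * (((K:ℝ)+1) * 2^K * (K.factorial:ℝ) * M^K) * Real.exp (-δ' * r * y) / (1+y) := by
          rw [hB_def]; ring
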